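/- Let p be a probability mass function on the integers with support {L,...,R} (L finite). If a random variable X with values in {L,...,R} has pmf p, then for every integer k with L ≤ k ≤ R, p(k) = E[-(p(X+1)-p(X))/p(X) · 1{X ≥ k}]. -/

import Mathlib

/-- Easy direction of the discrete Stein pmf identity: if a random variable with values in
`{L,...,R}` has pmf `p`, then `p k = E[-(Δ⁺p(X)/p(X)) · 1{X ≥ k}]` for all `L ≤ k ≤ R`. -/
theorem stmt_0 (p : ℤ → ℝ) (L : ℤ) (R : WithTop ℤ)
    (hsupp : ∀ k : ℤ, 0 < p k ↔ (L ≤ k ∧ (k : WithTop ℤ) ≤ R))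
    (hnonneg : ∀ k, 0 ≤ p k)
    (hsum : ∑' k : ℤ, p k = 1)
    (hmean : Summable (fun k : ℤ => |(k : ℝ)| * p k))
    (hint : Summable (fun k : ℤ => |(p (k + 1) - p k) / p k * (k : ℝ)| * p k)) :
    ∀ k : ℤ, L ≤ k → (k : WithTop ℤ) ≤ R →
      p k = ∑' j : ℤ, (-((p (j + 1) - p j) / p j) * (if k ≤ j then (1 : ℝ) else 0)) * p j := by
  intro k hLk hkR
  have hp : Summable p := by
    by_contra h
    rw [tsum_eq_zero_of_not_summable h] at hsum
    norm_num at hsum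
  -- pointwise identification of the summand with a telescoping term
  have hfun : ∀ j : ℤ, (-((p (j + 1) - p j) / p j) * (if k ≤ j then (1 : ℝ) else 0)) * p j
      = if k ≤ j then p j - p (j + 1) else 0 := by
    intro j
    by_cases hkj : k ≤ j
    · simp only [if_pos hkj, mul_one]
      rcases eq_or_lt_of_le (hnonneg j) with h0 | h0
      · have hLj : L ≤ j := hLk.trans hkj
        have hjR : ¬ ((j : WithTop ℤ) ≤ R) := by
          intro hjR
          have := (hsupp j).mpr ⟨hLj, hjR⟩
          rw [← h0] at this
          exact lt_irrefl 0 this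
        have hj1 : p (j + 1) = 0 := by
          rcases eq_or_lt_of_le (hnonneg (j + 1)) with h1 | h1
          · exact h1.symm
          · have h2 := (hsupp (j + 1)).mp h1
            have : (j : WithTop ℤ) ≤ R := le_trans (by exact_mod_cast (by omega : j ≤ j + 1)) h2.2
            exact absurd this hjR
        rw [← h0, hj1]
        ring
      · field_simp
        ring
    · simp [hkj]
  rw [tsum_congr hfun]
  -- reindex over ℕ via n ↦ k + n
  set g : ℤ → ℝ := fun j => if k ≤ j then p j - p (j + 1) else 0 with hg
  have hinj : Function.Injective (fun n : ℕ => k + (n : ℤ)) := by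
    intro a b hab
    simpa using hab
  have hsupp' : Function.support g ⊆ Set.range (fun n : ℕ => k + (n : ℤ)) := by
    intro j hj
    by_cases hkj : k ≤ j
    · exact ⟨(j - k).toNat, by simp; omega⟩
    · simp [hg, hkj] at hj
  rw [← Function.Injective.tsum_eq hinj hsupp']
  have hcomp : ∀ n : ℕ, g (k + (n : ℤ)) = p (k + n) - p (k + n + 1) := by
    intro n
    simp [hg, show k ≤ k + (n : ℤ) by omega]
  rw [tsum_congr hcomp]
  -- telescoping sum
  have hs1 : Summable (fun n : ℕ => p (k + n)) := by
    have := hp.comp_injective (i := fun n : ℕ => k + (n : ℤ)) hinj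
    exact this
  have hs2 : Summable (fun n : ℕ => p (k + n + 1)) := by
    have hinj2 : Function.Injective (fun n : ℕ => k + (n : ℤ) + 1) := by
      intro a b hab; simpa using hab
    exact hp.comp_injective hinj2
  have hsumm : Summable (fun n : ℕ => p (k + n) - p (k + n + 1)) := hs1.sub hs2
  have htend : Filter.Tendsto (fun N : ℕ => ∑ n ∈ Finset.range N, (p (k + n) - p (k + n + 1)))
      Filter.atTop (nhds (p k)) := by
    have heq : ∀ N : ℕ, ∑ n ∈ Finset.range N, (p (k + n) - p (k + n + 1)) = p k - p (k + N) := by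
      intro N
      have := Finset.sum_range_sub' (fun n : ℕ => p (k + n)) N
      simpa [add_assoc] using this
    simp only [heq]
    have h0 : Filter.Tendsto (fun N : ℕ => p (k + N)) Filter.atTop (nhds 0) := hs1.tendsto_atTop_zero
    have := Filter.Tendsto.sub (tendsto_const_nhds (x := p k)) h0
    simpa using this
  exact (tendsto_nhds_unique hsumm.hasSum.tendsto_sum_nat htend).symm
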